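/- Let G be a noncomplete (P2 ∪ P1)-free graph. Then the minimum size of a cutset of G equals the minimum degree δ(G); that is, every cutset of G has size at least δ(G), and G has a cutset of size exactly δ(G). -/
import Mathlib


open SimpleGraph

variable {V : Type*}

/-- The number of connected components of `G - S`. -/
noncomputable def SimpleGraph.compCount (G : SimpleGraph V) (S : Set V) : ℕ :=
  Nat.card (G.induce Sᶜ).ConnectedComponent

/-- `S` is a cutset of `G`: `G - S` has at least two connected components. -/
def SimpleGraph.IsCutset (G : SimpleGraph V) (S : Set V) : Prop :=
  2 ≤ G.compCount S

/-- `G` is `t`-tough. -/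
def SimpleGraph.Tough (t : ℝ) (G : SimpleGraph V) : Prop :=
  ∀ S : Set V, G.IsCutset S → t * G.compCount S ≤ S.ncard

/-- `G` contains no induced subgraph isomorphic to `H`. -/
def SimpleGraph.IndFree {W : Type*} (G : SimpleGraph V) (H : SimpleGraph W) : Prop :=
  ¬ ∃ f : W ↪ V, ∀ a b : W, G.Adj (f a) (f b) ↔ H.Adj a b

/-- The 5-vertex graph `2P2 ∪ P1`: two disjoint edges and an isolated vertex. -/
def twoP2P1 : SimpleGraph (Fin 5) :=
  SimpleGraph.fromRel (fun i j => (i = 0 ∧ j = 1) ∨ (i = 2 ∧ j = 3))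

/-- The 3-vertex graph `P2 ∪ P1`: an edge and an isolated vertex. -/
def P2P1 : SimpleGraph (Fin 3) :=
  SimpleGraph.fromRel (fun i j => i = 0 ∧ j = 1)

/-- The path on four vertices `P4`. -/
def P4 : SimpleGraph (Fin 4) :=
  SimpleGraph.fromRel (fun i j => (i = 0 ∧ j = 1) ∨ (i = 1 ∧ j = 2) ∨ (i = 2 ∧ j = 3))

/-- Degree of a vertex, as the cardinality of its neighbor set. -/
noncomputable def SimpleGraph.deg (G : SimpleGraph V) (v : V) : ℕ :=
  (G.neighborSet v).ncard

/-- Minimum degree. -/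
noncomputable def SimpleGraph.minDeg (G : SimpleGraph V) : ℕ :=
  sInf (Set.range G.deg)

/-- An independent set of vertices. -/
def SimpleGraph.IsIndepSet' (G : SimpleGraph V) (s : Set V) : Prop :=
  s.Pairwise (fun u v => ¬ G.Adj u v)

/-- The independence number. -/
noncomputable def SimpleGraph.indepNum' (G : SimpleGraph V) : ℕ :=
  sSup {n : ℕ | ∃ s : Set V, G.IsIndepSet' s ∧ s.ncard = n}

/-- `G` is a complete graph. -/
def SimpleGraph.IsCompleteGraph (G : SimpleGraph V) : Prop :=
  ∀ u v : V, u ≠ v → G.Adj u v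

open scoped Classical in
/-- Vertex connectivity: minimum size of a cutset for a noncomplete graph,
and `|V| - 1` for a complete graph. -/
noncomputable def SimpleGraph.kappa (G : SimpleGraph V) : ℕ :=
  if G.IsCompleteGraph then Nat.card V - 1
  else sInf {n : ℕ | ∃ S : Set V, G.IsCutset S ∧ S.ncard = n}

open scoped Classical in
/-- The scattering number: `max {c(G-S) - |S| : S a cutset}` for a noncomplete graph,
and `⊤` for a complete graph. -/
noncomputable def SimpleGraph.scatter (G : SimpleGraph V) : WithTop ℤ :=
  if G.IsCompleteGraph then ⊤
  else ((sSup {z : ℤ | ∃ S : Set V, G.IsCutset S ∧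
      z = (G.compCount S : ℤ) - (S.ncard : ℤ)} : ℤ) : WithTop ℤ)

/-- A `W`-matched path-cover of the vertex set `A`: a union of vertex-disjoint paths of `G`
covering `A`, each of whose two endvertices belong to `W`. -/
structure SimpleGraph.PathCover (G : SimpleGraph V) (A : Set V) (W : Set V) where
  num : ℕ
  left : Fin num → V
  right : Fin num → V
  walk : ∀ i, G.Walk (left i) (right i)
  isPath : ∀ i, (walk i).IsPath
  disj : ∀ i j, i ≠ j → ∀ v, v ∈ (walk i).support → v ∉ (walk j).support
  cover : A ⊆ {v | ∃ i, v ∈ (walk i).support}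
  matched : ∀ i, left i ∈ W ∧ right i ∈ W

/-- For a noncomplete `(P2 ∪ P1)`-free graph, the minimum size of a cutset equals the
minimum degree: every cutset has size at least `δ(G)`, and some cutset has size exactly
`δ(G)`. -/
theorem stmt_3 {V : Type*} [Fintype V] (G : SimpleGraph V) (hnc : ¬ G.IsCompleteGraph)
    (hfree : G.IndFree P2P1) :
    (∀ S : Set V, G.IsCutset S → G.minDeg ≤ S.ncard) ∧
    (∃ S : Set V, G.IsCutset S ∧ S.ncard = G.minDeg) := by
  classical
  have key : ∀ a b c : V, ¬G.Adj a b → ¬G.Adj b c → ¬G.Adj a c := by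
    intro a b c hab hbc hac
    by_cases h1 : b = a
    · exact hbc (h1 ▸ hac)
    by_cases h2 : b = c
    · exact hab (h2 ▸ hac)
    have hne : a ≠ c := hac.ne
    apply hfree
    have hinj : Function.Injective ![a, c, b] := by
      intro i j hij
      fin_cases i <;> fin_cases j <;> simp_all
    refine ⟨⟨![a, c, b], hinj⟩, ?_⟩
    intro i j
    have hca : G.Adj c a := hac.symm
    have hba : ¬ G.Adj b a := fun h => hab h.symm
    have hcb : ¬ G.Adj c b := fun h => hbc h.symm
    fin_cases i <;> fin_cases j <;>
      simp [P2P1, hab, hbc, hac, hca, hba, hcb, G.irrefl]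
  obtain ⟨u, v, huv, hadj⟩ : ∃ u v : V, u ≠ v ∧ ¬G.Adj u v := by
    by_contra h
    push_neg at h
    exact hnc fun a b hab => h a b hab
  -- the "part" of a vertex
  set P : V → Set V := fun z => {w | ¬ G.Adj z w} with hP
  have hNP : ∀ z : V, G.neighborSet z = (P z)ᶜ := by
    intro z
    ext w
    simp [hP, mem_neighborSet]
  have hdegP : ∀ z : V, (P z).ncard + G.deg z = Nat.card V := by
    intro z
    have := Set.ncard_add_ncard_compl (P z)
    rw [SimpleGraph.deg, hNP z]
    exact this
  have hPu2 : 2 ≤ (P u).ncard := by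
    have hsub : ({u, v} : Set V) ⊆ P u := by
      intro w hw
      rcases hw with rfl | hw
      · exact G.irrefl
      · rcases hw with rfl
        exact hadj
    calc 2 = ({u, v} : Set V).ncard := (Set.ncard_pair huv).symm
      _ ≤ (P u).ncard := Set.ncard_le_ncard hsub (Set.toFinite _)
  constructor
  · intro S hS
    have h2 : 1 < Nat.card (G.induce Sᶜ).ConnectedComponent := hS
    rw [Finite.one_lt_card_iff_nontrivial] at h2
    obtain ⟨c1, c2, hc⟩ := h2
    obtain ⟨x, rfl⟩ := c1.exists_rep
    obtain ⟨y, rfl⟩ := c2.exists_rep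
    have hxy : ¬ G.Adj (↑x) (↑y) := by
      intro h
      exact hc (ConnectedComponent.sound (Adj.reachable (by simpa using h)))
    have hsub : G.neighborSet (↑x : V) ⊆ S := by
      intro z hz
      have hxz : G.Adj (↑x) z := hz
      have hzy : G.Adj z (↑y) := by
        by_contra hzy
        have hyx : ¬ G.Adj (↑y) (↑x) := fun h => hxy h.symm
        exact key z (↑y) (↑x) hzy hyx hxz.symm
      by_contra hzS
      have hzSc : z ∈ Sᶜ := hzS
      have h1 : (G.induce Sᶜ).Adj x ⟨z, hzSc⟩ := by simpa using hxz
      have h2' : (G.induce Sᶜ).Adj ⟨z, hzSc⟩ y := by simpa using hzy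
      exact hc (ConnectedComponent.sound (h1.reachable.trans h2'.reachable))
    have : G.deg (↑x) ≤ S.ncard := Set.ncard_le_ncard hsub (Set.toFinite _)
    exact le_trans (Nat.sInf_le ⟨↑x, rfl⟩) this
  · have hne : (Set.range G.deg).Nonempty := ⟨G.deg u, u, rfl⟩
    obtain ⟨x, hx⟩ : ∃ x, G.deg x = G.minDeg := Nat.sInf_mem hne
    refine ⟨G.neighborSet x, ?_, hx⟩
    have hSc : (G.neighborSet x)ᶜ = P x := by
      rw [hNP x, compl_compl]
    have hbot : G.induce (G.neighborSet x)ᶜ = ⊥ := by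
      ext ⟨z, hz⟩ ⟨w, hw⟩
      simp only [comap_adj, bot_adj, iff_false]
      rw [hSc] at hz hw
      have hzx : ¬ G.Adj z x := fun h => hz h.symm
      exact key z x w hzx hw
    have hcard : G.compCount (G.neighborSet x) = ((G.neighborSet x)ᶜ).ncard := by
      rw [SimpleGraph.compCount, hbot, ← Nat.card_coe_set_eq]
      refine (Nat.card_eq_of_bijective (⊥ : SimpleGraph ((G.neighborSet x)ᶜ : Set V)).connectedComponentMk ⟨?_, ?_⟩).symm
      · intro a b hab
        exact reachable_bot.mp (ConnectedComponent.eq.mp hab)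
      · exact fun c => c.exists_rep
    show 2 ≤ G.compCount (G.neighborSet x)
    rw [hcard, hSc]
    have hdx : G.deg x ≤ G.deg u := hx ▸ Nat.sInf_le ⟨u, rfl⟩
    have h1 := hdegP x
    have h2 := hdegP u
    omega
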